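/- arXiv:1204.5488 — 2 statements merged into one kernel-verified Lean document; each statement's English description precedes it below -/
import Mathlib

section
/- It holds that α₀ = α − min{ (ακ_s − α₀^{(a)}κ)/κ_b , (α(1−κ_s) − α₀^{(d)}(1−κ))/(1−κ_b) }. -/
open Filter Topology

/-- A cumulative distribution function: non-decreasing, right-continuous,
tending to 0 at -∞ and to 1 at +∞. -/
def IsCDF (G : ℝ → ℝ) : Prop :=
  Monotone G ∧ (∀ x : ℝ, ContinuousWithinAt G (Set.Ici x) x) ∧
    Tendsto G atBot (𝓝 0) ∧ Tendsto G atTop (𝓝 1)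

/-- The identifiable mixing proportion α₀. -/
noncomputable def alpha0 (F Fb : ℝ → ℝ) : ℝ :=
  sInf {γ : ℝ | γ ∈ Set.Ioc (0 : ℝ) 1 ∧
    IsCDF (fun x => (F x - (1 - γ) * Fb x) / γ)}

open MeasureTheory

/-- An absolutely continuous CDF: a CDF with a density w.r.t. Lebesgue measure. -/
def IsACCDF (G : ℝ → ℝ) : Prop :=
  IsCDF G ∧ ∃ g : ℝ → ℝ, Integrable g volume ∧ (∀ᵐ x ∂volume, 0 ≤ g x) ∧
    ∀ x : ℝ, G x = ∫ t in Set.Iic x, g t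

/-- A piecewise-constant (purely discrete) CDF: all its mass is carried by
countably many atoms. -/
def IsDiscreteCDF (G : ℝ → ℝ) : Prop :=
  IsCDF G ∧ ∃ (a : ℕ → ℝ) (w : ℕ → ℝ), (∀ n : ℕ, 0 ≤ w n) ∧
    ∀ x : ℝ, G x = ∑' n : ℕ, if a n ≤ x then w n else 0

section Aux

lemma cdf_nonneg {G : ℝ → ℝ} (h : IsCDF G) (x : ℝ) : 0 ≤ G x :=
  h.1.le_of_tendsto h.2.2.1 x

lemma cdf_le_one {G : ℝ → ℝ} (h : IsCDF G) (x : ℝ) : G x ≤ 1 :=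
  h.1.ge_of_tendsto h.2.2.2 x

/-- IsCDF of a normalized difference is equivalent to monotonicity of the numerator. -/
lemma isCDF_div_iff {N : ℝ → ℝ} {γ : ℝ} (hγ : 0 < γ)
    (hrc : ∀ x, ContinuousWithinAt N (Set.Ici x) x)
    (hbot : Tendsto N atBot (𝓝 0)) (htop : Tendsto N atTop (𝓝 γ)) :
    IsCDF (fun x => N x / γ) ↔ Monotone N := by
  constructor
  · intro h x y hxy
    have h1 := h.1 hxy
    have := mul_le_mul_of_nonneg_right h1 hγ.le
    rwa [div_mul_cancel₀ _ hγ.ne', div_mul_cancel₀ _ hγ.ne'] at this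
  · intro hm
    refine ⟨hm.div_const hγ.le, fun x => (hrc x).div_const γ, ?_, ?_⟩
    · simpa using hbot.div_const γ
    · have := htop.div_const γ
      rwa [div_self hγ.ne'] at this

/-- Threshold lemma: the set of `β` for which `ψ - β φ` is monotone is `Iic T`. -/
lemma threshold {ψ φ : ℝ → ℝ} {L : ℝ}
    (hψm : Monotone ψ) (hψb : Tendsto ψ atBot (𝓝 0)) (hψt : Tendsto ψ atTop (𝓝 L))
    (hφm : Monotone φ) (hφb : Tendsto φ atBot (𝓝 0)) (hφt : Tendsto φ atTop (𝓝 1)) :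
    ∃ T : ℝ, 0 ≤ T ∧ T ≤ L ∧
      ∀ β : ℝ, Monotone (fun x => ψ x - β * φ x) ↔ β ≤ T := by
  set S : Set ℝ := {β | Monotone (fun x => ψ x - β * φ x)} with hS
  have hψnn : ∀ x, 0 ≤ ψ x := fun x => hψm.le_of_tendsto hψb x
  have hψle : ∀ x, ψ x ≤ L := fun x => hψm.ge_of_tendsto hψt x
  have h0S : (0 : ℝ) ∈ S := by
    simpa [hS] using hψm
  obtain ⟨y0, hy0⟩ : ∃ y0 : ℝ, (1:ℝ)/2 < φ y0 :=
    (hφt.eventually (eventually_gt_nhds (by norm_num : (1:ℝ)/2 < 1))).exists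
  obtain ⟨x0, hx0⟩ : ∃ x0 : ℝ, ∀ x ≤ x0, φ x < 1/2 := by
    have := hφb.eventually (eventually_lt_nhds (by norm_num : (0:ℝ) < 1/2))
    rw [eventually_atBot] at this
    exact this
  set x1 : ℝ := min x0 (y0 - 1) with hx1
  have hφx1 : φ x1 < 1/2 := hx0 _ (min_le_left _ _)
  have hx1y0 : x1 ≤ y0 := le_trans (min_le_right _ _) (by linarith)
  have hd : 0 < φ y0 - φ x1 := by linarith
  have hbdd : BddAbove S := by
    refine ⟨L / (φ y0 - φ x1), fun β hβ => ?_⟩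
    have h1 : ψ x1 - β * φ x1 ≤ ψ y0 - β * φ y0 := hβ hx1y0
    have h2 : β * (φ y0 - φ x1) ≤ L := by
      have := hψnn x1; have := hψle y0; nlinarith
    exact (le_div_iff₀ hd).2 h2
  set T : ℝ := sSup S with hT
  have hTS : T ∈ S := by
    intro x y hxy
    simp only
    rcases eq_or_lt_of_le (hφm hxy) with heq | hlt
    · have := hψm hxy
      rw [← heq]; linarith
    · have hub : ∀ β ∈ S, β ≤ (ψ y - ψ x) / (φ y - φ x) := by
        intro β hβ
        have h1 : ψ x - β * φ x ≤ ψ y - β * φ y := hβ hxy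
        exact (le_div_iff₀ (by linarith)).2 (by linarith)
      have := csSup_le ⟨0, h0S⟩ hub
      have := (le_div_iff₀ (by linarith : (0:ℝ) < φ y - φ x)).1 this
      nlinarith
  refine ⟨T, le_csSup hbdd h0S, ?_, fun β => ⟨fun hβ => le_csSup hbdd hβ, fun hβ => ?_⟩⟩
  · -- T ≤ L
    have hb2 : Tendsto (fun x => ψ x - T * φ x) atBot (𝓝 0) := by
      simpa using hψb.sub (hφb.const_mul T)
    have ht2 : Tendsto (fun x => ψ x - T * φ x) atTop (𝓝 (L - T)) := by
      simpa using hψt.sub (hφt.const_mul T)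
    have h1 : (0:ℝ) ≤ ψ 0 - T * φ 0 := hTS.le_of_tendsto hb2 0
    have h2 : ψ 0 - T * φ 0 ≤ L - T := hTS.ge_of_tendsto ht2 0
    linarith
  · intro x y hxy
    simp only
    have h1 := hTS hxy
    simp only at h1
    have h2 : β * (φ y - φ x) ≤ T * (φ y - φ x) :=
      mul_le_mul_of_nonneg_right hβ (sub_nonneg.2 (hφm hxy))
    nlinarith

/-- Summability of the weights of a discrete CDF. -/
lemma weights_summable {G : ℝ → ℝ} (hG : IsCDF G) {a w : ℕ → ℝ} (hw : ∀ n, 0 ≤ w n)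
    (hrep : ∀ x, G x = ∑' n, if a n ≤ x then w n else 0) :
    (∀ x : ℝ, Summable fun n => if a n ≤ x then w n else 0) ∧ Summable w := by
  have hsum : ∀ x : ℝ, Summable (fun n => if a n ≤ x then w n else 0) := by
    by_contra hns
    push_neg at hns
    obtain ⟨x, hx⟩ := hns
    have hall : ∀ y, x ≤ y → ¬ Summable (fun n => if a n ≤ y then w n else 0) := by
      intro y hy hSy
      refine hx (hSy.of_nonneg_of_le (fun n => ?_) (fun n => ?_))
      · split_ifs <;> simp [hw n]
      · split_ifs with h1 h2 <;> first
          | exact le_refl _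
          | exact absurd (le_trans h1 hy) h2
          | exact hw n
          | simp [hw n]
    have hzero : ∀ᶠ y in atTop, G y = 0 := by
      filter_upwards [eventually_ge_atTop x] with y hy
      rw [hrep y, tsum_eq_zero_of_not_summable (hall y hy)]
    have h1 : Tendsto G atTop (𝓝 (0:ℝ)) :=
      Tendsto.congr' (by filter_upwards [hzero] with y hy using hy.symm) tendsto_const_nhds
    have := tendsto_nhds_unique h1 hG.2.2.2
    norm_num at this
  refine ⟨hsum, summable_of_sum_le (c := 1) hw ?_⟩
  intro u
  obtain ⟨x, hx⟩ : ∃ x : ℝ, ∀ n ∈ u, a n ≤ x := by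
    rcases u.eq_empty_or_nonempty with rfl | hne
    · exact ⟨0, by simp⟩
    · exact ⟨(u.image a).max' (hne.image a), fun n hn =>
        (u.image a).le_max' _ (Finset.mem_image_of_mem a hn)⟩
  calc ∑ n ∈ u, w n = ∑ n ∈ u, (if a n ≤ x then w n else 0) :=
        Finset.sum_congr rfl (fun n hn => by rw [if_pos (hx n hn)])
    _ ≤ ∑' n, (if a n ≤ x then w n else 0) :=
        Summable.sum_le_tsum u (fun n _ => by split_ifs <;> simp [hw n]) (hsum x)
    _ = G x := (hrep x).symm
    _ ≤ 1 := cdf_le_one hG x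

end Aux
section Decomp

open Set

lemma hasSum_sumtype {f : ℕ ⊕ ℕ → ℝ} (h1 : Summable fun n => f (Sum.inl n))
    (h2 : Summable fun n => f (Sum.inr n)) :
    HasSum f (∑' n, f (Sum.inl n) + ∑' n, f (Sum.inr n)) := by
  have e : IsCompl (Set.range (Sum.inl : ℕ → ℕ ⊕ ℕ)) (Set.range (Sum.inr : ℕ → ℕ ⊕ ℕ)) :=
    Set.isCompl_range_inl_range_inr
  have ha : HasSum (fun x : Set.range (Sum.inl : ℕ → ℕ ⊕ ℕ) => f x) (∑' n, f (Sum.inl n)) :=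
    (Sum.inl_injective.hasSum_range_iff).mpr h1.hasSum
  have hb : HasSum (fun x : Set.range (Sum.inr : ℕ → ℕ ⊕ ℕ) => f x) (∑' n, f (Sum.inr n)) :=
    (Sum.inr_injective.hasSum_range_iff).mpr h2.hasSum
  exact ha.add_compl (by rw [e.compl_eq]; exact hb)

variable {ι : Type*}

/-- The key decomposition lemma: if the sum of an absolutely continuous part and a
pure jump part is monotone, then both parts are monotone. -/
lemma decomp {g : ℝ → ℝ} (hg : Integrable g volume) {p u : ι → ℝ}
    (hu : Summable fun i => |u i|)
    (hmono : Monotone fun x => (∫ t in Set.Iic x, g t) + ∑' i, if p i ≤ x then u i else 0) :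
    Monotone (fun x => ∫ t in Set.Iic x, g t) ∧
      Monotone (fun x => ∑' i, if p i ≤ x then u i else 0) := by
  set A : ℝ → ℝ := fun x => ∫ t in Set.Iic x, g t with hA
  set D : ℝ → ℝ := fun x => ∑' i, if p i ≤ x then u i else 0 with hD
  set h : ℝ → ℝ := fun x => A x + D x with hh
  -- continuity of A
  have hAc : Continuous A := by
    have h1 := hg.continuous_primitive 0
    have he : A = fun x => (∫ t in (0:ℝ)..x, g t) + ∫ t in Set.Iic 0, g t := by
      funext x
      have := intervalIntegral.integral_Iic_sub_Iic hg.integrableOn hg.integrableOn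
        (a := 0) (b := x)
      simp only [hA]; linarith
    rw [he]; exact h1.add continuous_const
  -- summability facts
  have habs : ∀ (f : ι → ℝ), (∀ i, |f i| ≤ |u i|) → Summable f := fun f hf =>
    Summable.of_norm_bounded hu hf
  have hsD : ∀ x : ℝ, Summable fun i => if p i ≤ x then u i else 0 := by
    intro x
    refine habs _ fun i => ?_
    split_ifs <;> simp [abs_nonneg]
  -- difference formula for D
  have hDsub : ∀ x y : ℝ, x ≤ y →
      D y - D x = ∑' i, if x < p i ∧ p i ≤ y then u i else 0 := by
    intro x y hxy
    rw [hD]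
    rw [← Summable.tsum_sub (hsD y) (hsD x)]
    refine tsum_congr fun i => ?_
    by_cases h1 : p i ≤ x
    · rw [if_pos (le_trans h1 hxy), if_pos h1, if_neg (by push_neg; intro hc; linarith)]
      ring
    · by_cases h2 : p i ≤ y
      · rw [if_pos h2, if_neg h1, if_pos ⟨lt_of_not_ge h1, h2⟩]; ring
      · rw [if_neg h2, if_neg h1, if_neg (fun hc => h2 hc.2)]
        ring
  -- the jump function
  set jump : ℝ → ℝ := fun t => ∑' i, if p i = t then u i else 0 with hjump
  have hsj : ∀ t : ℝ, Summable fun i => if p i = t then u i else 0 := by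
    intro t; refine habs _ fun i => ?_; split_ifs <;> simp [abs_nonneg]
  -- key limit: h t - h (t - 1/(k+1)) → jump t
  have key : ∀ t : ℝ, Tendsto (fun k : ℕ => h t - h (t - 1/(k+1))) atTop (𝓝 (jump t)) := by
    intro t
    have hsk : Tendsto (fun k : ℕ => t - 1/(k+1)) atTop (𝓝 t) := by
      have := tendsto_one_div_add_atTop_nhds_zero_nat (𝕜 := ℝ)
      simpa using (tendsto_const_nhds (x := t)).sub this
    have hsklt : ∀ k : ℕ, t - 1/(k+1) < t := by
      intro k
      have : (0:ℝ) < 1/(k+1) := by positivity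
      linarith
    have heq : ∀ k : ℕ, h t - h (t - 1/(k+1)) =
        (A t - A (t - 1/(k+1))) + ∑' i, if t - 1/(k+1) < p i ∧ p i ≤ t then u i else 0 := by
      intro k
      have := hDsub (t - 1/(k+1)) t (hsklt k).le
      simp only [hh]; linarith
    have part1 : Tendsto (fun k : ℕ => A t - A (t - 1/(k+1))) atTop (𝓝 0) := by
      have := (hAc.continuousAt (x := t)).tendsto.comp hsk
      simpa using (tendsto_const_nhds (x := A t)).sub this
    have part2 : Tendsto (fun k : ℕ => ∑' i, if t - 1/(k+1) < p i ∧ p i ≤ t then u i else 0)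
        atTop (𝓝 (jump t)) := by
      refine tendsto_tsum_of_dominated_convergence hu (fun i => ?_) ?_
      · -- pointwise convergence of each term
        by_cases hpt : p i = t
        · have : ∀ k : ℕ, (if t - 1/(k+1) < p i ∧ p i ≤ t then u i else 0) = u i := by
            intro k; rw [if_pos ⟨by rw [hpt]; exact hsklt k, le_of_eq hpt⟩]
          rw [if_pos hpt]
          exact Tendsto.congr (fun k => (this k).symm) tendsto_const_nhds
        · rw [if_neg hpt]
          rcases lt_or_gt_of_ne hpt with hlt | hgt
          · -- p i < t : eventually t - 1/(k+1) ≥ p i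
            have hev : ∀ᶠ k : ℕ in atTop, (if t - 1/(k+1) < p i ∧ p i ≤ t then u i else 0) = 0 := by
              filter_upwards [hsk.eventually (eventually_gt_nhds hlt)] with k hk
              rw [if_neg (by push_neg; intro hc; linarith)]
            exact Tendsto.congr' (by filter_upwards [hev] with k hk using hk.symm)
              tendsto_const_nhds
          · have : ∀ k : ℕ, (if t - 1/(k+1) < p i ∧ p i ≤ t then u i else 0) = 0 := by
              intro k; rw [if_neg (by push_neg; intro hc; linarith)]
            exact Tendsto.congr (fun k => (this k).symm) tendsto_const_nhds
      · filter_upwards with k i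
        rw [Real.norm_eq_abs]
        split_ifs <;> simp [abs_nonneg]
    have := part1.add part2
    rw [zero_add] at this
    exact this.congr (fun k => (heq k).symm)
  -- jumps are nonnegative
  have hjnn : ∀ t : ℝ, 0 ≤ jump t := by
    intro t
    refine ge_of_tendsto (key t) ?_
    filter_upwards with k
    have : (0:ℝ) < 1/(k+1) := by positivity
    exact sub_nonneg.2 (hmono (by linarith))
  -- jump t ≤ h t - h s for s < t
  have hjle : ∀ s t : ℝ, s < t → jump t ≤ h t - h s := by
    intro s t hst
    refine le_of_tendsto (key t) ?_
    have hsk : Tendsto (fun k : ℕ => t - 1/(k+1)) atTop (𝓝 t) := by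
      have := tendsto_one_div_add_atTop_nhds_zero_nat (𝕜 := ℝ)
      simpa using (tendsto_const_nhds (x := t)).sub this
    filter_upwards [hsk.eventually (eventually_gt_nhds hst)] with k hk
    exact sub_le_sub_left (hmono hk.le) _
  -- regrouping of the jump part over an interval
  have regroup : ∀ x y : ℝ, x ≤ y →
      HasSum (fun t : ℝ => if x < t ∧ t ≤ y then jump t else 0) (D y - D x) := by
    intro x y hxy
    classical
    have hsf : Summable fun i => if x < p i ∧ p i ≤ y then u i else 0 := by
      refine habs _ fun i => ?_; split_ifs <;> simp [abs_nonneg]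
    set f : ι → ℝ := fun i => if x < p i ∧ p i ≤ y then u i else 0 with hf
    have h1 : HasSum (fun t : ℝ => ∑' i : (p ⁻¹' {t} : Set ι), f i) (∑' i, f i) :=
      hsf.hasSum.tsum_fiberwise p
    have h2 : ∀ t : ℝ, (∑' i : (p ⁻¹' {t} : Set ι), f i) =
        if x < t ∧ t ≤ y then jump t else 0 := by
      intro t
      by_cases ht : x < t ∧ t ≤ y
      · rw [if_pos ht, hjump]
        rw [tsum_subtype]
        refine tsum_congr fun i => ?_
        rw [Set.indicator_apply]
        by_cases hit : p i = t
        · simp only [Set.mem_preimage, Set.mem_singleton_iff, hit, if_pos]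
          show (if x < p i ∧ p i ≤ y then u i else 0) = u i
          rw [if_pos (by rw [hit]; exact ht)]
        · simp [Set.mem_preimage, Set.mem_singleton_iff, hit]
      · rw [if_neg ht]
        have : ∀ i : (p ⁻¹' {t} : Set ι), f i = 0 := by
          rintro ⟨i, hi⟩
          simp only [Set.mem_preimage, Set.mem_singleton_iff] at hi
          show (if x < p i ∧ p i ≤ y then u i else 0) = 0
          rw [if_neg (by rw [hi]; exact ht)]
        simp [this]
    rw [← hDsub x y hxy] at h1
    rwa [funext h2] at h1
  -- monotonicity of D
  have hDmono : Monotone D := by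
    intro x y hxy
    have := (regroup x y hxy).tsum_eq
    have hnn : 0 ≤ D y - D x := by
      rw [← this]
      exact tsum_nonneg fun t => by split_ifs with h'; exacts [hjnn t, le_refl 0]
    linarith
  refine ⟨?_, hDmono⟩
  -- monotonicity of A: h - D, using the finite jump bound
  -- finite claim
  have finclaim : ∀ (T : Finset ℝ) (x' y' : ℝ), x' ≤ y' → (∀ t ∈ T, x' < t ∧ t ≤ y') →
      ∑ t ∈ T, jump t ≤ h y' - h x' := by
    intro T
    induction T using Finset.strongInduction with
    | _ T ih =>
      intro x' y' hxy hT
      rcases T.eq_empty_or_nonempty with rfl | hne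
      · simpa using sub_nonneg.2 (hmono hxy)
      · set m := T.max' hne with hm
        have hmT : m ∈ T := T.max'_mem hne
        have hmxy := hT m hmT
        set T' := T.erase m with hT'
        have hsum_split : ∑ t ∈ T, jump t = ∑ t ∈ T', jump t + jump m :=
          (Finset.sum_erase_add T _ hmT).symm
        rcases T'.eq_empty_or_nonempty with hT'e | hT'ne
        · rw [hsum_split, hT'e]
          simp only [Finset.sum_empty, zero_add]
          have h1 : jump m ≤ h m - h x' := hjle x' m hmxy.1
          have h2 : h m ≤ h y' := hmono hmxy.2
          linarith
        · set s' := T'.max' hT'ne with hs'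
          have hs'T' : s' ∈ T' := T'.max'_mem hT'ne
          have hs'T : s' ∈ T := Finset.mem_of_mem_erase hs'T'
          have hs'm : s' < m := lt_of_le_of_ne (T.le_max' s' hs'T)
            (Finset.ne_of_mem_erase hs'T')
          have h1 : ∑ t ∈ T', jump t ≤ h s' - h x' := by
            refine ih T' (Finset.erase_ssubset hmT) x' s' (hT s' hs'T).1.le fun t ht => ?_
            exact ⟨(hT t (Finset.mem_of_mem_erase ht)).1, T'.le_max' t ht⟩
          have h2 : jump m ≤ h m - h s' := hjle s' m hs'm
          have h3 : h m ≤ h y' := hmono hmxy.2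
          rw [hsum_split]
          linarith
  intro x y hxy
  have hbd : D y - D x ≤ h y - h x := by
    rw [← (regroup x y hxy).tsum_eq]
    refine Summable.tsum_le_of_sum_le (regroup x y hxy).summable fun T => ?_
    rw [Finset.sum_ite, Finset.sum_const_zero, add_zero]
    refine finclaim _ x y hxy fun t ht => ?_
    exact (Finset.mem_filter.1 ht).2
  have hAy : A y - A x = (h y - h x) - (D y - D x) := by
    have h1 : h y = A y + D y := by rw [hh]
    have h2 : h x = A x + D x := by rw [hh]
    linarith [h1, h2]
  have : (0:ℝ) ≤ A y - A x := by rw [hAy]; linarith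
  show A x ≤ A y
  linarith

end Decomp
section MoreAux

lemma sInf_aux {c : ℝ} (hc0 : 0 ≤ c) (hc1 : c ≤ 1) :
    sInf {γ : ℝ | γ ∈ Set.Ioc (0:ℝ) 1 ∧ c ≤ γ} = c := by
  rcases eq_or_lt_of_le hc0 with rfl | hc
  · have hs : {γ : ℝ | γ ∈ Set.Ioc (0:ℝ) 1 ∧ (0:ℝ) ≤ γ} = Set.Ioc (0:ℝ) 1 := by
      ext γ
      exact ⟨fun h => h.1, fun h => ⟨h, h.1.le⟩⟩
    rw [hs, csInf_Ioc zero_lt_one]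
  · have hs : {γ : ℝ | γ ∈ Set.Ioc (0:ℝ) 1 ∧ c ≤ γ} = Set.Icc c 1 := by
      ext γ
      constructor
      · rintro ⟨⟨_, h2⟩, h3⟩; exact ⟨h3, h2⟩
      · rintro ⟨h1, h2⟩; exact ⟨⟨lt_of_lt_of_le hc h1, h2⟩, h1⟩
    rw [hs, csInf_Icc hc1]

lemma monotone_const_mul_iff {f : ℝ → ℝ} {c : ℝ} (hc : 0 < c) :
    Monotone (fun x => c * f x) ↔ Monotone f := by
  constructor
  · intro h x y hxy
    exact le_of_mul_le_mul_left (h hxy) hc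
  · intro h x y hxy
    exact mul_le_mul_of_nonneg_left (h hxy) hc.le

lemma isCDF_combo {G H : ℝ → ℝ} (hG : IsCDF G) (hH : IsCDF H) {c d : ℝ}
    (hc : 0 ≤ c) (hd : 0 ≤ d) (hcd : c + d = 1) :
    IsCDF (fun x => c * G x + d * H x) := by
  refine ⟨fun x y hxy => add_le_add (mul_le_mul_of_nonneg_left (hG.1 hxy) hc)
      (mul_le_mul_of_nonneg_left (hH.1 hxy) hd),
    fun x => (continuousWithinAt_const.mul (hG.2.1 x)).add
      (continuousWithinAt_const.mul (hH.2.1 x)), ?_, ?_⟩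
  · simpa using (hG.2.2.1.const_mul c).add (hH.2.2.1.const_mul d)
  · have := (hG.2.2.2.const_mul c).add (hH.2.2.2.const_mul d)
    simpa [hcd] using this

end MoreAux
section SumHelpers

lemma summable_elim_abs {w' v' : ℕ → ℝ} (h1 : Summable fun n => |w' n|)
    (h2 : Summable fun n => |v' n|) :
    Summable fun i : ℕ ⊕ ℕ => |Sum.elim w' v' i| :=
  (hasSum_sumtype (f := fun i : ℕ ⊕ ℕ => |Sum.elim w' v' i|)
    (by simpa using h1) (by simpa using h2)).summable

lemma tsum_elim_ite {a b : ℕ → ℝ} {w' v' : ℕ → ℝ} (x : ℝ)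
    (h1 : Summable fun n => if a n ≤ x then w' n else 0)
    (h2 : Summable fun n => if b n ≤ x then v' n else 0) :
    ∑' i : ℕ ⊕ ℕ, (if Sum.elim a b i ≤ x then Sum.elim w' v' i else 0) =
      (∑' n : ℕ, if a n ≤ x then w' n else 0) + ∑' n : ℕ, if b n ≤ x then v' n else 0 := by
  have := hasSum_sumtype (f := fun i : ℕ ⊕ ℕ => if Sum.elim a b i ≤ x then Sum.elim w' v' i else 0)
    h1 h2
  exact this.tsum_eq

lemma tsum_ite_mul {a : ℕ → ℝ} {w' : ℕ → ℝ} (c x : ℝ) :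
    ∑' n : ℕ, (if a n ≤ x then c * w' n else 0) = c * ∑' n : ℕ, (if a n ≤ x then w' n else 0) := by
  rw [← tsum_mul_left]
  exact tsum_congr fun n => by split_ifs <;> simp

lemma summable_ite_mul {a : ℕ → ℝ} {w' : ℕ → ℝ} {x : ℝ} (c : ℝ)
    (h : Summable fun n => if a n ≤ x then w' n else 0) :
    Summable fun n : ℕ => if a n ≤ x then c * w' n else 0 := by
  have := h.mul_left c
  exact this.congr fun n => by split_ifs <;> simp

end SumHelpers
set_option maxHeartbeats 1000000 in
/-- Lemma 5: decomposition of α₀ into the absolutely continuous and discrete parts. -/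
theorem alpha0_mixed
    (Fsa Fba Fsd Fbd : ℝ → ℝ)
    (hFsa : IsACCDF Fsa) (hFba : IsACCDF Fba)
    (hFsd : IsDiscreteCDF Fsd) (hFbd : IsDiscreteCDF Fbd)
    (κs κb : ℝ) (hκs : κs ∈ Set.Ioo (0 : ℝ) 1) (hκb : κb ∈ Set.Ioo (0 : ℝ) 1)
    (Fs Fb : ℝ → ℝ)
    (hFs : Fs = fun x => κs * Fsa x + (1 - κs) * Fsd x)
    (hFb : Fb = fun x => κb * Fba x + (1 - κb) * Fbd x)
    (hne : Fs ≠ Fb)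
    (α : ℝ) (hα : α ∈ Set.Ioc (0 : ℝ) 1)
    (F : ℝ → ℝ) (hF : F = fun x => α * Fs x + (1 - α) * Fb x)
    (κ : ℝ) (hκ : κ = α * κs + (1 - α) * κb) (hκmem : κ ∈ Set.Ioo (0 : ℝ) 1)
    (Fa Fd : ℝ → ℝ)
    (hFa : Fa = fun x => (α * κs * Fsa x + (1 - α) * κb * Fba x) / κ)
    (hFd : Fd = fun x => (α * (1 - κs) * Fsd x + (1 - α) * (1 - κb) * Fbd x) / (1 - κ)) :
    alpha0 F Fb =
      α - min ((α * κs - alpha0 Fa Fba * κ) / κb)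
              ((α * (1 - κs) - alpha0 Fd Fbd * (1 - κ)) / (1 - κb)) := by
  obtain ⟨hκ0, hκ1⟩ := hκmem
  obtain ⟨hκs0, hκs1⟩ := hκs
  obtain ⟨hκb0, hκb1⟩ := hκb
  obtain ⟨hα0, hα1⟩ := hα
  have h1κb : (0:ℝ) < 1 - κb := by linarith
  have h1κs : (0:ℝ) < 1 - κs := by linarith
  have h1κ : (0:ℝ) < 1 - κ := by linarith
  have h1α : (0:ℝ) ≤ 1 - α := by linarith
  obtain ⟨cFsa, gs, hgs_int, _, hgs_rep⟩ := hFsa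
  obtain ⟨cFba, gb, hgb_int, _, hgb_rep⟩ := hFba
  obtain ⟨cFsd, a, w, hw, hwrep⟩ := hFsd
  obtain ⟨cFbd, b, v, hv, hvrep⟩ := hFbd
  have hws := weights_summable cFsd hw hwrep
  have hvs := weights_summable cFbd hv hvrep
  -- CDFs of the mixtures
  have cFs : IsCDF Fs := by
    rw [hFs]; exact isCDF_combo cFsa cFsd hκs0.le (by linarith) (by ring)
  have cFb : IsCDF Fb := by
    rw [hFb]; exact isCDF_combo cFba cFbd hκb0.le (by linarith) (by ring)
  have cF : IsCDF F := by
    rw [hF]; exact isCDF_combo cFs cFb hα0.le (by linarith) (by ring)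
  have cFa : IsCDF Fa := by
    have he : Fa = fun x => (α*κs/κ) * Fsa x + ((1-α)*κb/κ) * Fba x := by
      rw [hFa]; funext x; field_simp
    rw [he]
    exact isCDF_combo cFsa cFba (by positivity) (by positivity)
      (by rw [← add_div, div_eq_one_iff_eq hκ0.ne', hκ])
  have cFd : IsCDF Fd := by
    have he : Fd = fun x => (α*(1-κs)/(1-κ)) * Fsd x + ((1-α)*(1-κb)/(1-κ)) * Fbd x := by
      rw [hFd]; funext x; field_simp
    rw [he]
    exact isCDF_combo cFsd cFbd (by positivity) (by positivity)
      (by rw [← add_div, div_eq_one_iff_eq h1κ.ne', hκ]; ring)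
  -- thresholds
  obtain ⟨Ta, hTa0, hTaL, hTa⟩ := threshold (ψ := fun x => α*κs*Fsa x) (L := α*κs) (φ := Fba)
    (fun x y hxy => mul_le_mul_of_nonneg_left (cFsa.1 hxy) (by positivity))
    (by simpa using cFsa.2.2.1.const_mul (α*κs))
    (by simpa using cFsa.2.2.2.const_mul (α*κs))
    cFba.1 cFba.2.2.1 cFba.2.2.2
  obtain ⟨Td, hTd0, hTdL, hTd⟩ := threshold (ψ := fun x => α*(1-κs)*Fsd x) (L := α*(1-κs))
    (φ := Fbd)
    (fun x y hxy => mul_le_mul_of_nonneg_left (cFsd.1 hxy) (by positivity))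
    (by simpa using cFsd.2.2.1.const_mul (α*(1-κs)))
    (by simpa using cFsd.2.2.2.const_mul (α*(1-κs)))
    cFbd.1 cFbd.2.2.1 cFbd.2.2.2
  -- the key decomposition equivalence
  have keyEquiv : ∀ s : ℝ, Monotone (fun x => α * Fs x - s * Fb x) ↔
      (s*κb ≤ Ta ∧ s*(1-κb) ≤ Td) := by
    intro s
    have hid : ∀ x, α * Fs x - s * Fb x =
        (α*κs*Fsa x - s*κb*Fba x) + (α*(1-κs)*Fsd x - s*(1-κb)*Fbd x) := by
      intro x; rw [hFs, hFb]; ring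
    have hAeq : ∀ x, (∫ t in Set.Iic x, (α*κs * gs t - s*κb * gb t)) =
        α*κs*Fsa x - s*κb*Fba x := by
      intro x
      rw [integral_sub ((hgs_int.const_mul _).integrableOn) ((hgb_int.const_mul _).integrableOn),
        integral_const_mul, integral_const_mul, hgs_rep, hgb_rep]
    have hDeq : ∀ x, (∑' i : ℕ ⊕ ℕ,
        if Sum.elim a b i ≤ x then Sum.elim (fun n => α*(1-κs) * w n)
          (fun n => (-(s*(1-κb))) * v n) i else 0) =
        α*(1-κs)*Fsd x - s*(1-κb)*Fbd x := by
      intro x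
      rw [tsum_elim_ite x (summable_ite_mul _ (hws.1 x)) (summable_ite_mul _ (hvs.1 x)),
        tsum_ite_mul, tsum_ite_mul, ← hwrep, ← hvrep]
      ring
    constructor
    · intro hm
      have hgint : Integrable (fun t => α*κs * gs t - s*κb * gb t) volume :=
        (hgs_int.const_mul _).sub (hgb_int.const_mul _)
      have huabs : Summable fun i : ℕ ⊕ ℕ =>
          |Sum.elim (fun n => α*(1-κs) * w n) (fun n => (-(s*(1-κb))) * v n) i| :=
        summable_elim_abs ((hws.2.mul_left (α*(1-κs))).abs) ((hvs.2.mul_left (-(s*(1-κb)))).abs)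
      have hm' : Monotone fun x => (∫ t in Set.Iic x, (α*κs * gs t - s*κb * gb t)) +
          ∑' i : ℕ ⊕ ℕ, if Sum.elim a b i ≤ x then Sum.elim (fun n => α*(1-κs) * w n)
            (fun n => (-(s*(1-κb))) * v n) i else 0 := by
        intro x y hxy
        simp only [hAeq, hDeq, ← hid]
        exact hm hxy
      obtain ⟨hA, hD⟩ := decomp hgint huabs hm'
      constructor
      · refine (hTa (s*κb)).1 fun x y hxy => ?_
        have := hA hxy
        simp only [hAeq] at this
        exact this
      · refine (hTd (s*(1-κb))).1 fun x y hxy => ?_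
        have := hD hxy
        simp only [hDeq] at this
        exact this
    · rintro ⟨h1, h2⟩
      have m1 := (hTa (s*κb)).2 h1
      have m2 := (hTd (s*(1-κb))).2 h2
      intro x y hxy
      have := add_le_add (m1 hxy) (m2 hxy)
      simp only at this ⊢
      rw [hid x, hid y]
      exact this
  -- alpha0 F Fb
  set cF' : ℝ := α - min (Ta/κb) (Td/(1-κb)) with hcF'
  have hminnn : 0 ≤ min (Ta/κb) (Td/(1-κb)) := le_min (by positivity) (by positivity)
  have hcF0 : 0 ≤ cF' := by
    rcases le_total κs κb with h | h
    · have h1 : Ta ≤ α*κb := le_trans hTaL (by nlinarith)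
      have h2 : Ta/κb ≤ α := (div_le_iff₀ hκb0).2 (by linarith)
      have := min_le_left (Ta/κb) (Td/(1-κb))
      rw [hcF']; linarith
    · have h1 : Td ≤ α*(1-κb) := le_trans hTdL (by nlinarith)
      have h2 : Td/(1-κb) ≤ α := (div_le_iff₀ h1κb).2 (by linarith)
      have := min_le_right (Ta/κb) (Td/(1-κb))
      rw [hcF']; linarith
  have hcF1 : cF' ≤ 1 := by rw [hcF']; linarith
  have halphaF : alpha0 F Fb = cF' := by
    rw [alpha0]
    have hset : {γ : ℝ | γ ∈ Set.Ioc (0:ℝ) 1 ∧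
        IsCDF (fun x => (F x - (1 - γ) * Fb x) / γ)} =
        {γ : ℝ | γ ∈ Set.Ioc (0:ℝ) 1 ∧ cF' ≤ γ} := by
      ext γ
      simp only [Set.mem_setOf_eq, and_congr_right_iff]
      intro hγ
      have hdiv := isCDF_div_iff (N := fun x => F x - (1 - γ) * Fb x) hγ.1
        (fun x => (cF.2.1 x).sub (continuousWithinAt_const.mul (cFb.2.1 x)))
        (by simpa using cF.2.2.1.sub (cFb.2.2.1.const_mul (1-γ)))
        (by simpa using cF.2.2.2.sub (cFb.2.2.2.const_mul (1-γ)))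
      rw [hdiv]
      have hNid : (fun x => F x - (1 - γ) * Fb x) = fun x => α * Fs x - (α - γ) * Fb x := by
        funext x; rw [hF]; ring
      rw [hNid, keyEquiv (α - γ),
        show (α-γ)*κb ≤ Ta ↔ α - γ ≤ Ta/κb from (le_div_iff₀ hκb0).symm,
        show (α-γ)*(1-κb) ≤ Td ↔ α - γ ≤ Td/(1-κb) from (le_div_iff₀ h1κb).symm,
        ← le_min_iff]
      constructor
      · intro h; rw [hcF']; linarith
      · intro h; rw [hcF'] at h; linarith
    rw [hset]
    exact sInf_aux hcF0 hcF1
  -- alpha0 Fa Fba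
  set ca : ℝ := 1 - (Ta + (1-α)*κb)/κ with hca
  have hca0 : 0 ≤ ca := by
    have h1 : Ta + (1-α)*κb ≤ κ := by rw [hκ]; nlinarith [hTaL]
    have := (div_le_one hκ0).2 h1
    rw [hca]; linarith
  have hca1 : ca ≤ 1 := by
    have : (0:ℝ) ≤ (Ta + (1-α)*κb)/κ := by positivity
    rw [hca]; linarith
  have halphaA : alpha0 Fa Fba = ca := by
    rw [alpha0]
    have hset : {γ : ℝ | γ ∈ Set.Ioc (0:ℝ) 1 ∧
        IsCDF (fun x => (Fa x - (1 - γ) * Fba x) / γ)} =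
        {γ : ℝ | γ ∈ Set.Ioc (0:ℝ) 1 ∧ ca ≤ γ} := by
      ext γ
      simp only [Set.mem_setOf_eq, and_congr_right_iff]
      intro hγ
      have hdiv := isCDF_div_iff (N := fun x => Fa x - (1 - γ) * Fba x) hγ.1
        (fun x => (cFa.2.1 x).sub (continuousWithinAt_const.mul (cFba.2.1 x)))
        (by simpa using cFa.2.2.1.sub (cFba.2.2.1.const_mul (1-γ)))
        (by simpa using cFa.2.2.2.sub (cFba.2.2.2.const_mul (1-γ)))
      rw [hdiv]
      have hMid : (fun x => κ * (Fa x - (1 - γ) * Fba x)) =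
          fun x => α*κs*Fsa x - ((1-γ)*κ - (1-α)*κb)*Fba x := by
        funext x; rw [hFa]; field_simp; ring
      rw [← monotone_const_mul_iff (f := fun x => Fa x - (1 - γ) * Fba x) hκ0, hMid,
        hTa ((1-γ)*κ - (1-α)*κb)]
      constructor
      · intro h
        have h2 : (1-γ) ≤ (Ta + (1-α)*κb)/κ := (le_div_iff₀ hκ0).2 (by linarith)
        rw [hca]; linarith
      · intro h
        rw [hca] at h
        have h2 : (1-γ) ≤ (Ta + (1-α)*κb)/κ := by linarith
        have := (le_div_iff₀ hκ0).1 h2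
        linarith
    rw [hset]
    exact sInf_aux hca0 hca1
  -- alpha0 Fd Fbd
  set cd : ℝ := 1 - (Td + (1-α)*(1-κb))/(1-κ) with hcd
  have hcd0 : 0 ≤ cd := by
    have h1 : Td + (1-α)*(1-κb) ≤ 1-κ := by rw [hκ]; nlinarith [hTdL]
    have := (div_le_one h1κ).2 h1
    rw [hcd]; linarith
  have hcd1 : cd ≤ 1 := by
    have : (0:ℝ) ≤ (Td + (1-α)*(1-κb))/(1-κ) := by positivity
    rw [hcd]; linarith
  have halphaD : alpha0 Fd Fbd = cd := by
    rw [alpha0]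
    have hset : {γ : ℝ | γ ∈ Set.Ioc (0:ℝ) 1 ∧
        IsCDF (fun x => (Fd x - (1 - γ) * Fbd x) / γ)} =
        {γ : ℝ | γ ∈ Set.Ioc (0:ℝ) 1 ∧ cd ≤ γ} := by
      ext γ
      simp only [Set.mem_setOf_eq, and_congr_right_iff]
      intro hγ
      have hdiv := isCDF_div_iff (N := fun x => Fd x - (1 - γ) * Fbd x) hγ.1
        (fun x => (cFd.2.1 x).sub (continuousWithinAt_const.mul (cFbd.2.1 x)))
        (by simpa using cFd.2.2.1.sub (cFbd.2.2.1.const_mul (1-γ)))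
        (by simpa using cFd.2.2.2.sub (cFbd.2.2.2.const_mul (1-γ)))
      rw [hdiv]
      have hMid : (fun x => (1-κ) * (Fd x - (1 - γ) * Fbd x)) =
          fun x => α*(1-κs)*Fsd x - ((1-γ)*(1-κ) - (1-α)*(1-κb))*Fbd x := by
        funext x; rw [hFd]; field_simp; ring
      rw [← monotone_const_mul_iff (f := fun x => Fd x - (1 - γ) * Fbd x) h1κ, hMid,
        hTd ((1-γ)*(1-κ) - (1-α)*(1-κb))]
      constructor
      · intro h
        have h2 : (1-γ) ≤ (Td + (1-α)*(1-κb))/(1-κ) := (le_div_iff₀ h1κ).2 (by linarith)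
        rw [hcd]; linarith
      · intro h
        rw [hcd] at h
        have h2 : (1-γ) ≤ (Td + (1-α)*(1-κb))/(1-κ) := by linarith
        have := (le_div_iff₀ h1κ).1 h2
        linarith
    rw [hset]
    exact sInf_aux hcd0 hcd1
  -- final algebra
  rw [halphaF, halphaA, halphaD]
  have hcaκ : ca * κ = κ - (Ta + (1-α)*κb) := by
    rw [hca]; field_simp
  have hcdκ : cd * (1-κ) = (1-κ) - (Td + (1-α)*(1-κb)) := by
    rw [hcd]; field_simp
  have e1 : (α*κs - ca*κ)/κb = Ta/κb := by
    rw [hcaκ]; congr 1; rw [hκ]; ring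
  have e2 : (α*(1-κs) - cd*(1-κ))/(1-κb) = Td/(1-κb) := by
    rw [hcdκ]; congr 1; rw [hκ]; ring
  rw [e1, e2, hcF']
end

section
/- Suppose F = F_b (so that α₀ = 0). If c_n → ∞ as n → ∞, then P(α̂_n = 0) → 1 as n → ∞. -/
open Filter Topology MeasureTheory ProbabilityTheory

variable {Ω : Type*} [MeasurableSpace Ω]

/-- The empirical CDF of the first n observations X₁(ω), …, Xₙ(ω). -/
noncomputable def empCDF (X : ℕ → Ω → ℝ) (n : ℕ) (ω : Ω) (x : ℝ) : ℝ :=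
  (n : ℝ)⁻¹ * ∑ i ∈ Finset.range n, if X i ω ≤ x then (1 : ℝ) else 0

/-- The empirical L₂ distance dₙ(g,h) between two functions, based on the data
X₁(ω), …, Xₙ(ω). -/
noncomputable def empDist (X : ℕ → Ω → ℝ) (n : ℕ) (ω : Ω) (g h : ℝ → ℝ) : ℝ :=
  Real.sqrt ((n : ℝ)⁻¹ * ∑ i ∈ Finset.range n, (g (X i ω) - h (X i ω)) ^ 2)

/-- The criterion function Cₙ(γ) = γ dₙ(F̂ₛₙᵞ, F̌ₛₙᵞ)
  = inf over CDFs W of dₙ(𝔽ₙ, γW + (1−γ)F_b), with Cₙ(0) = dₙ(𝔽ₙ, F_b). -/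
noncomputable def critFn (Fb : ℝ → ℝ) (X : ℕ → Ω → ℝ) (n : ℕ) (γ : ℝ) (ω : Ω) : ℝ :=
  if γ = 0 then empDist X n ω (empCDF X n ω) Fb
  else sInf {v : ℝ | ∃ W : ℝ → ℝ, IsCDF W ∧
    v = empDist X n ω (empCDF X n ω) (fun x => γ * W x + (1 - γ) * Fb x)}

/-- The estimator α̂ₙ = inf{γ ∈ [0,1] : √n Cₙ(γ) ≤ cₙ}. -/
noncomputable def hatAlpha (Fb : ℝ → ℝ) (X : ℕ → Ω → ℝ) (cn : ℝ) (n : ℕ) (ω : Ω) : ℝ :=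
  sInf {γ : ℝ | γ ∈ Set.Icc (0 : ℝ) 1 ∧ Real.sqrt n * critFn Fb X n γ ω ≤ cn}

/-! ### Auxiliary lemmas -/

lemma IsCDF.nonneg' {G : ℝ → ℝ} (hG : IsCDF G) (x : ℝ) : 0 ≤ G x :=
  le_of_tendsto hG.2.2.1 (Filter.eventually_atBot.mpr ⟨x, fun _ hy => hG.1 hy⟩)

lemma IsCDF.le_one' {G : ℝ → ℝ} (hG : IsCDF G) (x : ℝ) : G x ≤ 1 :=
  ge_of_tendsto hG.2.2.2 (Filter.eventually_atTop.mpr ⟨x, fun _ hy => hG.1 hy⟩)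

/-- The key cancellation: for `U` independent of the pair `V`, with `U`
distributed according to the CDF `Fb`, the integral of
`(1{U ≤ V.1} - Fb V.1) * (1{V.2 ≤ V.1} - Fb V.1)` vanishes. -/
lemma key_inner_zero (P : Measure Ω) [IsProbabilityMeasure P]
    (Fb : ℝ → ℝ) (hFbm : Measurable Fb)
    (hFb0 : ∀ x, 0 ≤ Fb x) (hFb1 : ∀ x, Fb x ≤ 1)
    (V : Ω → ℝ × ℝ) (U : Ω → ℝ) (hV : Measurable V) (hU : Measurable U)
    (hind : IndepFun V U P) (hlaw : ∀ x, (P {ω | U ω ≤ x}).toReal = Fb x) :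
    ∫ ω, ((if U ω ≤ (V ω).1 then (1:ℝ) else 0) - Fb (V ω).1) *
        ((if (V ω).2 ≤ (V ω).1 then (1:ℝ) else 0) - Fb (V ω).1) ∂P = 0 := by
  set G : (ℝ × ℝ) × ℝ → ℝ := fun p =>
    ((if p.2 ≤ p.1.1 then (1:ℝ) else 0) - Fb p.1.1) *
      ((if p.1.2 ≤ p.1.1 then (1:ℝ) else 0) - Fb p.1.1) with hG
  have hGm : Measurable G := by
    apply Measurable.mul
    · exact (Measurable.ite (measurableSet_le measurable_snd (measurable_fst.fst))
        measurable_const measurable_const).sub (hFbm.comp measurable_fst.fst)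
    · exact (Measurable.ite (measurableSet_le measurable_fst.snd (measurable_fst.fst))
        measurable_const measurable_const).sub (hFbm.comp measurable_fst.fst)
  haveI : IsProbabilityMeasure (P.map V) := Measure.isProbabilityMeasure_map hV.aemeasurable
  haveI : IsProbabilityMeasure (P.map U) := Measure.isProbabilityMeasure_map hU.aemeasurable
  have hmap : P.map (fun ω => (V ω, U ω)) = (P.map V).prod (P.map U) :=
    (indepFun_iff_map_prod_eq_prod_map_map hV.aemeasurable hU.aemeasurable).mp hind
  have hbound : ∀ p : (ℝ × ℝ) × ℝ, ‖G p‖ ≤ 1 := by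
    intro p
    rw [Real.norm_eq_abs, hG, abs_mul]
    have h1 : ∀ (t : Prop) (_ : Decidable t) (x : ℝ),
        |(if t then (1:ℝ) else 0) - Fb x| ≤ 1 := by
      intro t _ x
      rcases le_or_gt ((if t then (1:ℝ) else 0) - Fb x) 0 with h | h
      · rw [abs_of_nonpos h]
        have := hFb1 x; split_ifs <;> linarith
      · rw [abs_of_pos h]
        have := hFb0 x; split_ifs <;> linarith
    calc |(if p.2 ≤ p.1.1 then (1:ℝ) else 0) - Fb p.1.1| *
        |(if p.1.2 ≤ p.1.1 then (1:ℝ) else 0) - Fb p.1.1| ≤ 1 * 1 :=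
          mul_le_mul (h1 _ _ _) (h1 _ _ _) (abs_nonneg _) zero_le_one
      _ = 1 := by ring
  have hGint : Integrable G ((P.map V).prod (P.map U)) := by
    refine (integrable_const (1:ℝ)).mono' hGm.aestronglyMeasurable ?_
    exact Filter.Eventually.of_forall hbound
  have hlaw' : ∀ x : ℝ, ∫ u, (if u ≤ x then (1:ℝ) else 0) ∂(P.map U) = Fb x := by
    intro x
    have h1 : (fun u : ℝ => if u ≤ x then (1:ℝ) else 0)
        = fun u => (Set.Iic x).indicator 1 u := by
      funext u
      simp [Set.indicator_apply, Set.mem_Iic]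
    rw [h1, integral_indicator_one measurableSet_Iic,
      Measure.real, Measure.map_apply hU measurableSet_Iic]
    exact hlaw x
  have hcalc : ∫ ω, G (V ω, U ω) ∂P = ∫ p, G p ∂((P.map V).prod (P.map U)) := by
    rw [← hmap]
    exact (integral_map (hV.prodMk hU).aemeasurable hGm.aestronglyMeasurable).symm
  have : ∫ ω, G (V ω, U ω) ∂P = 0 := by
    rw [hcalc, integral_prod G hGint]
    have : ∀ v : ℝ × ℝ, ∫ u, G (v, u) ∂(P.map U) = 0 := by
      intro v
      have hGvu : (fun u => G (v, u)) = fun u =>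
          ((if u ≤ v.1 then (1:ℝ) else 0) - Fb v.1) *
            ((if v.2 ≤ v.1 then (1:ℝ) else 0) - Fb v.1) := rfl
      rw [hGvu, integral_mul_const]
      have hint1 : Integrable (fun u : ℝ => if u ≤ v.1 then (1:ℝ) else 0) (P.map U) := by
        refine (integrable_const (1:ℝ)).mono' ?_ ?_
        · exact ((Measurable.ite (measurableSet_le measurable_id measurable_const)
            measurable_const measurable_const)).aestronglyMeasurable
        · refine Filter.Eventually.of_forall fun u => ?_
          rw [Real.norm_eq_abs]
          split_ifs <;> simp
      rw [integral_sub hint1 (integrable_const _), hlaw' v.1, integral_const]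
      simp
    rw [integral_congr_ae (Filter.Eventually.of_forall this)]
    simp
  exact this

/-- The second-moment bound: `E[∑ᵢ (𝔽ₙ(Xᵢ) - F(Xᵢ))²] ≤ 3`. -/
lemma moment_bound (P : Measure Ω) [IsProbabilityMeasure P]
    (Fb : ℝ → ℝ) (hFb : IsCDF Fb)
    (X : ℕ → Ω → ℝ) (hmeas : ∀ i, Measurable (X i))
    (hindep : iIndepFun X P)
    (hdist : ∀ i, ∀ x : ℝ, (P {ω | X i ω ≤ x}).toReal = Fb x)
    (n : ℕ) (hn : 1 ≤ n) :
    ∫ ω, (∑ i ∈ Finset.range n, (empCDF X n ω (X i ω) - Fb (X i ω))^2) ∂P ≤ 3 := by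
  have hFbm : Measurable Fb := hFb.1.measurable
  have hn0 : (n : ℝ) ≠ 0 := Nat.cast_ne_zero.mpr (by omega)
  set φ : ℕ → ℕ → Ω → ℝ := fun j i ω =>
    (if X j ω ≤ X i ω then (1:ℝ) else 0) - Fb (X i ω) with hφ
  have hφmeas : ∀ j i, Measurable (φ j i) := fun j i =>
    (Measurable.ite (measurableSet_le (hmeas j) (hmeas i)) measurable_const
      measurable_const).sub (hFbm.comp (hmeas i))
  have hφbdd : ∀ j i ω, |φ j i ω| ≤ 1 := by
    intro j i ω
    have h0 := hFb.nonneg' (X i ω)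
    have h1 := hFb.le_one' (X i ω)
    rw [hφ]; dsimp only
    rcases le_or_gt ((if X j ω ≤ X i ω then (1:ℝ) else 0) - Fb (X i ω)) 0 with h | h
    · rw [abs_of_nonpos h]; split_ifs <;> linarith
    · rw [abs_of_pos h]; split_ifs <;> linarith
  have hprod_int : ∀ j k i, Integrable (fun ω => φ j i ω * φ k i ω) P := by
    intro j k i
    refine (integrable_const (1:ℝ)).mono'
      ((hφmeas j i).mul (hφmeas k i)).aestronglyMeasurable ?_
    refine Filter.Eventually.of_forall fun ω => ?_
    rw [Real.norm_eq_abs, abs_mul]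
    calc |φ j i ω| * |φ k i ω| ≤ 1 * 1 :=
          mul_le_mul (hφbdd j i ω) (hφbdd k i ω) (abs_nonneg _) zero_le_one
      _ = 1 := by ring
  -- rewrite the integrand
  have hA : ∀ ω i, empCDF X n ω (X i ω) - Fb (X i ω)
      = (n:ℝ)⁻¹ * ∑ j ∈ Finset.range n, φ j i ω := by
    intro ω i
    rw [hφ]
    simp only [Finset.sum_sub_distrib, Finset.sum_const, Finset.card_range, nsmul_eq_mul]
    rw [empCDF, mul_sub, ← mul_assoc, inv_mul_cancel₀ hn0, one_mul]
  have hS : ∀ ω, (∑ i ∈ Finset.range n, (empCDF X n ω (X i ω) - Fb (X i ω))^2)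
      = ((n:ℝ)⁻¹)^2 * ∑ i ∈ Finset.range n, ∑ j ∈ Finset.range n, ∑ k ∈ Finset.range n,
          φ j i ω * φ k i ω := by
    intro ω
    rw [Finset.mul_sum]
    refine Finset.sum_congr rfl fun i _ => ?_
    rw [hA ω i, mul_pow, sq ((∑ j ∈ Finset.range n, φ j i ω)), Finset.sum_mul_sum]
  -- integral of triple sum
  have hint_sum : ∀ i, Integrable (fun ω => ∑ j ∈ Finset.range n, ∑ k ∈ Finset.range n,
      φ j i ω * φ k i ω) P := by
    intro i
    apply integrable_finset_sum
    intro j _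
    exact integrable_finset_sum _ (fun k _ => hprod_int j k i)
  have hIbound : ∀ i ∈ Finset.range n, ∀ j ∈ Finset.range n, ∀ k ∈ Finset.range n,
      ∫ ω, φ j i ω * φ k i ω ∂P ≤ if j = i ∨ j = k then 1 else 0 := by
    intro i _ j _ k _
    by_cases hcase : j = i ∨ j = k
    · rw [if_pos hcase]
      have := norm_integral_le_of_norm_le_const (μ := P)
        (f := fun ω => φ j i ω * φ k i ω) (C := 1) (Filter.Eventually.of_forall fun ω => by
          rw [Real.norm_eq_abs, abs_mul]
          calc |φ j i ω| * |φ k i ω| ≤ 1 * 1 :=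
              mul_le_mul (hφbdd j i ω) (hφbdd k i ω) (abs_nonneg _) zero_le_one
            _ = 1 := by ring)
      rw [Real.norm_eq_abs] at this
      simp only [measure_univ, ENNReal.toReal_one, probReal_univ, mul_one] at this
      exact (le_abs_self _).trans this
    · rw [if_neg hcase]
      push_neg at hcase
      have hzero := key_inner_zero P Fb hFbm (fun x => hFb.nonneg' x) (fun x => hFb.le_one' x)
        (fun ω => (X i ω, X k ω)) (X j) ((hmeas i).prodMk (hmeas k)) (hmeas j)
        (hindep.indepFun_prodMk hmeas i k j (Ne.symm hcase.1) (Ne.symm hcase.2))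
        (hdist j)
      exact le_of_eq hzero
  calc ∫ ω, (∑ i ∈ Finset.range n, (empCDF X n ω (X i ω) - Fb (X i ω))^2) ∂P
      = ((n:ℝ)⁻¹)^2 * ∫ ω, ∑ i ∈ Finset.range n, ∑ j ∈ Finset.range n, ∑ k ∈ Finset.range n,
          φ j i ω * φ k i ω ∂P := by
        rw [← integral_const_mul]
        exact integral_congr_ae (Filter.Eventually.of_forall fun ω => hS ω)
    _ = ((n:ℝ)⁻¹)^2 * ∑ i ∈ Finset.range n, ∑ j ∈ Finset.range n, ∑ k ∈ Finset.range n,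
          ∫ ω, φ j i ω * φ k i ω ∂P := by
        congr 1
        rw [integral_finset_sum _ (fun i _ => hint_sum i)]
        refine Finset.sum_congr rfl fun i _ => ?_
        rw [integral_finset_sum _ (fun j _ => integrable_finset_sum _ (fun k _ => hprod_int j k i))]
        exact Finset.sum_congr rfl fun j _ =>
          integral_finset_sum _ (fun k _ => hprod_int j k i)
    _ ≤ ((n:ℝ)⁻¹)^2 * ∑ i ∈ Finset.range n, ∑ j ∈ Finset.range n, ∑ k ∈ Finset.range n,
          (if j = i ∨ j = k then (1:ℝ) else 0) := by
        apply mul_le_mul_of_nonneg_left _ (by positivity)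
        refine Finset.sum_le_sum fun i hi => ?_
        refine Finset.sum_le_sum fun j hj => ?_
        exact Finset.sum_le_sum fun k hk => hIbound i hi j hj k hk
    _ ≤ ((n:ℝ)⁻¹)^2 * ∑ i ∈ Finset.range n, ∑ j ∈ Finset.range n, ∑ k ∈ Finset.range n,
          ((if j = i then (1:ℝ) else 0) + (if j = k then (1:ℝ) else 0)) := by
        apply mul_le_mul_of_nonneg_left _ (by positivity)
        refine Finset.sum_le_sum fun i _ => Finset.sum_le_sum fun j _ =>
          Finset.sum_le_sum fun k _ => ?_
        by_cases h1 : j = i <;> by_cases h2 : j = k <;> simp [h1, h2] <;> split_ifs <;> norm_num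
    _ ≤ 3 := by
        have hcount : ∀ i ∈ Finset.range n, ∑ j ∈ Finset.range n, ∑ k ∈ Finset.range n,
            ((if j = i then (1:ℝ) else 0) + (if j = k then (1:ℝ) else 0)) ≤ 2 * n := by
          intro i hi
          have : ∀ j ∈ Finset.range n, ∑ k ∈ Finset.range n,
              ((if j = i then (1:ℝ) else 0) + (if j = k then (1:ℝ) else 0))
              = n * (if j = i then (1:ℝ) else 0) + 1 := by
            intro j hj
            rw [Finset.sum_add_distrib, Finset.sum_const, Finset.card_range, nsmul_eq_mul]
            congr 1
            rw [Finset.sum_ite_eq (Finset.range n) j (fun _ => (1:ℝ))]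
            simp [Finset.mem_range.mp hj]
          rw [Finset.sum_congr rfl this, Finset.sum_add_distrib, Finset.sum_const,
            Finset.card_range, nsmul_eq_mul, ← Finset.mul_sum,
            Finset.sum_ite_eq' (Finset.range n) i (fun _ => (1:ℝ))]
          rw [if_pos hi]
          ring_nf
          nlinarith [(Nat.one_le_cast (α := ℝ)).mpr hn]
        calc ((n:ℝ)⁻¹)^2 * ∑ i ∈ Finset.range n, ∑ j ∈ Finset.range n, ∑ k ∈ Finset.range n,
            ((if j = i then (1:ℝ) else 0) + (if j = k then (1:ℝ) else 0))
            ≤ ((n:ℝ)⁻¹)^2 * ∑ i ∈ Finset.range n, (2 * n : ℝ) := by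
              apply mul_le_mul_of_nonneg_left _ (by positivity)
              exact Finset.sum_le_sum hcount
          _ = ((n:ℝ)⁻¹)^2 * (n * (2 * n)) := by
              rw [Finset.sum_const, Finset.card_range, nsmul_eq_mul]
          _ = 2 := by field_simp
          _ ≤ 3 := by norm_num

/-- Lemma 9: if F = F_b (so α₀ = 0) and cₙ → ∞, then P(α̂ₙ = 0) → 1. -/
theorem hatAlpha_eq_zero_of_null
    (P : Measure Ω) [IsProbabilityMeasure P]
    (Fb : ℝ → ℝ) (hFb : IsCDF Fb)
    (F : ℝ → ℝ) (hF : F = Fb)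
    (X : ℕ → Ω → ℝ) (hmeas : ∀ i, Measurable (X i))
    (hindep : iIndepFun X P)
    (hdist : ∀ i, ∀ x : ℝ, (P {ω | X i ω ≤ x}).toReal = F x)
    (c : ℕ → ℝ) (hc_pos : ∀ n, 0 < c n)
    (hc_infty : Tendsto c atTop atTop) :
    Tendsto (fun n => P {ω | hatAlpha Fb X (c n) n ω = 0}) atTop (𝓝 1) := by
  subst hF
  have hFbm : Measurable F := hFb.1.measurable
  -- the statistic Sₙ = ∑ᵢ (𝔽ₙ(Xᵢ) - F(Xᵢ))²
  set S : ℕ → Ω → ℝ := fun n ω =>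
    ∑ i ∈ Finset.range n, (empCDF X n ω (X i ω) - F (X i ω))^2 with hSdef
  have hSnonneg : ∀ n ω, 0 ≤ S n ω := by
    intro n ω
    exact Finset.sum_nonneg fun i _ => sq_nonneg _
  have hSmeas : ∀ n, Measurable (S n) := by
    intro n
    apply Finset.measurable_sum
    intro i _
    have h1 : Measurable (fun ω => empCDF X n ω (X i ω)) := by
      apply Measurable.mul measurable_const
      apply Finset.measurable_sum
      intro j _
      exact Measurable.ite (measurableSet_le (hmeas j) (hmeas i)) measurable_const
        measurable_const
    exact (h1.sub (hFbm.comp (hmeas i))).pow_const 2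
  -- empirical CDF lies in [0,1]
  have hemp : ∀ n, 1 ≤ n → ∀ ω x, 0 ≤ empCDF X n ω x ∧ empCDF X n ω x ≤ 1 := by
    intro n hn ω x
    have hn0 : (0:ℝ) < n := by exact_mod_cast hn
    constructor
    · apply mul_nonneg (by positivity)
      exact Finset.sum_nonneg fun j _ => by split_ifs <;> norm_num
    · have hsum : (∑ j ∈ Finset.range n, if X j ω ≤ x then (1:ℝ) else 0) ≤ n := by
        calc (∑ j ∈ Finset.range n, if X j ω ≤ x then (1:ℝ) else 0)
            ≤ ∑ j ∈ Finset.range n, (1:ℝ) :=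
              Finset.sum_le_sum fun j _ => by split_ifs <;> norm_num
          _ = n := by rw [Finset.sum_const, Finset.card_range, nsmul_eq_mul, mul_one]
      calc (n : ℝ)⁻¹ * (∑ j ∈ Finset.range n, if X j ω ≤ x then (1:ℝ) else 0)
          ≤ (n : ℝ)⁻¹ * n := by
            apply mul_le_mul_of_nonneg_left hsum (by positivity)
        _ = 1 := inv_mul_cancel₀ hn0.ne'
  -- S is bounded by n, hence integrable
  have hSle : ∀ n, 1 ≤ n → ∀ ω, S n ω ≤ n := by
    intro n hn ω
    calc S n ω ≤ ∑ i ∈ Finset.range n, (1:ℝ) := by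
          apply Finset.sum_le_sum
          intro i _
          have h1 := hemp n hn ω (X i ω)
          have h2 := hFb.nonneg' (X i ω)
          have h3 := hFb.le_one' (X i ω)
          nlinarith [h1.1, h1.2]
      _ = n := by rw [Finset.sum_const, Finset.card_range, nsmul_eq_mul, mul_one]
  have hSint : ∀ n, 1 ≤ n → Integrable (S n) P := by
    intro n hn
    refine (integrable_const (n:ℝ)).mono' (hSmeas n).aestronglyMeasurable ?_
    refine Filter.Eventually.of_forall fun ω => ?_
    rw [Real.norm_eq_abs, abs_of_nonneg (hSnonneg n ω)]
    exact hSle n hn ω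
  -- good event: √n Cₙ(0) ≤ cₙ implies α̂ₙ = 0
  have hgood_sub : ∀ n : ℕ, {ω | Real.sqrt n * critFn F X n 0 ω ≤ c n}
      ⊆ {ω | hatAlpha F X (c n) n ω = 0} := by
    intro n ω hω
    simp only [Set.mem_setOf_eq] at hω ⊢
    set A := {γ : ℝ | γ ∈ Set.Icc (0:ℝ) 1 ∧ Real.sqrt n * critFn F X n γ ω ≤ c n} with hA
    have h0 : (0:ℝ) ∈ A := ⟨⟨le_refl 0, zero_le_one⟩, hω⟩
    have hlb : ∀ γ ∈ A, (0:ℝ) ≤ γ := fun γ hγ => hγ.1.1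
    rw [hatAlpha]
    exact le_antisymm (csInf_le ⟨0, fun γ hγ => hlb γ hγ⟩ h0) (le_csInf ⟨0, h0⟩ hlb)
  -- the complement of the good event is contained in the bad (Markov) event
  have hunion : ∀ n : ℕ, 1 ≤ n → (Set.univ : Set Ω) ⊆
      {ω | Real.sqrt n * critFn F X n 0 ω ≤ c n} ∪ {ω | (c n)^2 ≤ S n ω} := by
    intro n hn ω _
    by_cases hb : (c n)^2 ≤ S n ω
    · exact Or.inr hb
    · left
      show Real.sqrt n * critFn F X n 0 ω ≤ c n
      have hcrit : critFn F X n 0 ω = Real.sqrt ((n:ℝ)⁻¹ * S n ω) := by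
        simp [critFn, empDist, hSdef]
      rw [hcrit]
      have hn0 : (n : ℝ) ≠ 0 := by positivity
      calc Real.sqrt n * Real.sqrt ((n:ℝ)⁻¹ * S n ω)
          = Real.sqrt ((n:ℝ) * ((n:ℝ)⁻¹ * S n ω)) :=
            (Real.sqrt_mul (Nat.cast_nonneg n) _).symm
        _ = Real.sqrt (S n ω) := by rw [← mul_assoc, mul_inv_cancel₀ hn0, one_mul]
        _ ≤ Real.sqrt ((c n)^2) := Real.sqrt_le_sqrt (le_of_lt (lt_of_not_ge hb))
        _ = c n := Real.sqrt_sq (hc_pos n).le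
  -- Markov's inequality
  have hmarkov : ∀ n : ℕ, 1 ≤ n → P {ω | (c n)^2 ≤ S n ω}
      ≤ ENNReal.ofReal 3 / ENNReal.ofReal ((c n)^2) := by
    intro n hn
    have hε0 : ENNReal.ofReal ((c n)^2) ≠ 0 :=
      (ENNReal.ofReal_pos.mpr (pow_pos (hc_pos n) 2)).ne'
    have hmark := meas_ge_le_lintegral_div (μ := P)
      (f := fun ω => ENNReal.ofReal (S n ω))
      ((ENNReal.measurable_ofReal.comp (hSmeas n)).aemeasurable) hε0 ENNReal.ofReal_ne_top
    have hsub : {ω | (c n)^2 ≤ S n ω}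
        ⊆ {ω | ENNReal.ofReal ((c n)^2) ≤ ENNReal.ofReal (S n ω)} :=
      fun ω h => ENNReal.ofReal_le_ofReal h
    have hlint : ∫⁻ ω, ENNReal.ofReal (S n ω) ∂P = ENNReal.ofReal (∫ ω, S n ω ∂P) :=
      (ofReal_integral_eq_lintegral_ofReal (hSint n hn)
        (Filter.Eventually.of_forall (hSnonneg n))).symm
    calc P {ω | (c n)^2 ≤ S n ω}
        ≤ P {ω | ENNReal.ofReal ((c n)^2) ≤ ENNReal.ofReal (S n ω)} := measure_mono hsub
      _ ≤ (∫⁻ ω, ENNReal.ofReal (S n ω) ∂P) / ENNReal.ofReal ((c n)^2) := hmark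
      _ = ENNReal.ofReal (∫ ω, S n ω ∂P) / ENNReal.ofReal ((c n)^2) := by rw [hlint]
      _ ≤ ENNReal.ofReal 3 / ENNReal.ofReal ((c n)^2) := by
          apply ENNReal.div_le_div_right
          exact ENNReal.ofReal_le_ofReal
            (moment_bound P F hFb X hmeas hindep hdist n hn)
  -- the bound tends to 0
  have hc2 : Tendsto (fun n => (c n)^2) atTop atTop := by
    have := hc_infty.atTop_mul_atTop₀ hc_infty
    simpa [pow_two] using this
  have htop : Tendsto (fun n => ENNReal.ofReal ((c n)^2)) atTop (𝓝 ⊤) :=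
    ENNReal.tendsto_ofReal_atTop.comp hc2
  have hinv : Tendsto (fun n => (ENNReal.ofReal ((c n)^2))⁻¹) atTop (𝓝 0) := by
    simpa using ENNReal.tendsto_inv_iff.mpr htop
  have hbnd0 : Tendsto (fun n => ENNReal.ofReal 3 / ENNReal.ofReal ((c n)^2))
      atTop (𝓝 0) := by
    simp only [div_eq_mul_inv]
    have h3 := ENNReal.Tendsto.const_mul (a := ENNReal.ofReal 3) hinv
      (Or.inr ENNReal.ofReal_ne_top)
    simpa using h3
  have hlow : Tendsto (fun n => 1 - ENNReal.ofReal 3 / ENNReal.ofReal ((c n)^2))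
      atTop (𝓝 1) := by
    have := ENNReal.Tendsto.sub
      (tendsto_const_nhds : Tendsto (fun _ : ℕ => (1:ENNReal)) atTop (𝓝 1)) hbnd0
      (Or.inl ENNReal.one_ne_top)
    simpa using this
  -- squeeze
  apply tendsto_of_tendsto_of_tendsto_of_le_of_le' hlow tendsto_const_nhds
  · filter_upwards [eventually_ge_atTop 1] with n hn
    have h1 : (1 : ENNReal) ≤ P {ω | Real.sqrt n * critFn F X n 0 ω ≤ c n}
        + P {ω | (c n)^2 ≤ S n ω} := by
      calc (1 : ENNReal) = P Set.univ := (measure_univ).symm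
        _ ≤ P ({ω | Real.sqrt n * critFn F X n 0 ω ≤ c n} ∪ {ω | (c n)^2 ≤ S n ω}) :=
            measure_mono (hunion n hn)
        _ ≤ _ := measure_union_le _ _
    calc 1 - ENNReal.ofReal 3 / ENNReal.ofReal ((c n)^2)
        ≤ 1 - P {ω | (c n)^2 ≤ S n ω} := tsub_le_tsub_left (hmarkov n hn) 1
      _ ≤ P {ω | Real.sqrt n * critFn F X n 0 ω ≤ c n} := tsub_le_iff_right.mpr h1
      _ ≤ P {ω | hatAlpha F X (c n) n ω = 0} := measure_mono (hgood_sub n)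
  · exact Filter.Eventually.of_forall fun n => prob_le_one
end
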